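/- With the notation above, the restriction Q_{+1} of Q(α,β) to H_{+1} is unitarily equivalent to the Jacobi operator Q̂_{+1} on ℓ²(ℕ) with diagonal entries (1/2)b_{+1}(n), where b_{+1}(n) = α(1+4n) for even n and β(1+4n) for odd n, and off-diagonal entries (1/2)a_+(n) with a_+(n) = −√((2n+1)(2n+2)). -/

import Mathlib

open MeasureTheory

noncomputable def ket (n : ℕ) : ℝ → ℂ := fun x =>
  (((Polynomial.aeval (Real.sqrt 2 * x)) (Polynomial.hermite n) : ℝ) *
    Real.exp (-(x ^ 2) / 2) : ℝ)

noncomputable def Qact (α β : ℝ) (u : (ℝ → ℂ) × (ℝ → ℂ)) : (ℝ → ℂ) × (ℝ → ℂ) :=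
  (fun x => (α : ℂ) * (-(1/2) * deriv (deriv u.1) x + (1/2) * (x : ℂ) ^ 2 * u.1 x)
      - ((x : ℂ) * deriv u.2 x + (1/2) * u.2 x),
   fun x => (β : ℂ) * (-(1/2) * deriv (deriv u.2) x + (1/2) * (x : ℂ) ^ 2 * u.2 x)
      + ((x : ℂ) * deriv u.1 x + (1/2) * u.1 x))

/-- Generating set of the subspace `H_{+1}`. -/
noncomputable def SplusOne : Set ((ℝ → ℂ) × (ℝ → ℂ)) :=
  {f | ∃ n : ℕ, f = (ket (4 * n), 0) ∨ f = (0, ket (4 * n + 2))}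

/-- Off-diagonal entries `a_+(n) = -√((2n+1)(2n+2))`. -/
noncomputable def aPlus (n : ℕ) : ℝ := -Real.sqrt ((2 * n + 1) * (2 * n + 2))

/-- Diagonal entries `b_{+1}(n)`: `α(1+4n)` for even `n`, `β(1+4n)` for odd `n`. -/
noncomputable def bPlusOne (α β : ℝ) (n : ℕ) : ℝ :=
  if Even n then α * (1 + 4 * n) else β * (1 + 4 * n)

open Polynomial

theorem derivative_hermite' : ∀ n : ℕ,
    derivative (hermite n) = (n : ℤ[X]) * hermite (n - 1)
  | 0 => by simp [hermite_zero]
  | 1 => by simp [hermite_one, hermite_zero]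
  | (m+2) => by
    have ih1 := derivative_hermite' (m+1)
    have ih0 := derivative_hermite' m
    have h0 : derivative ((m+1 : ℕ) : ℤ[X]) = 0 := by simp
    rw [hermite_succ (m+1), derivative_sub, derivative_mul, derivative_X, one_mul, ih1,
      derivative_mul, h0]
    have e1 : m + 2 - 1 = m + 1 := by omega
    simp only [Nat.add_sub_cancel, e1]
    rw [hermite_succ m, ih0]
    push_cast
    ring

noncomputable def hval (n : ℕ) (y : ℝ) : ℝ := Polynomial.aeval y (Polynomial.hermite n)

theorem hval_succ (n : ℕ) (y : ℝ) :
    hval (n+1) y = y * hval n y - (n : ℝ) * hval (n-1) y := by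
  simp only [hval, hermite_succ, derivative_hermite', map_sub, map_mul, aeval_X, map_natCast]

theorem hasDerivAt_hval (n : ℕ) (y : ℝ) :
    HasDerivAt (hval n) ((n : ℝ) * hval (n-1) y) y := by
  have h := Polynomial.hasDerivAt_aeval (q := hermite n) y
  rw [derivative_hermite'] at h
  convert h using 1
  · rfl
  · rfl
  · simp [hval, map_mul]

theorem hval_zero (y : ℝ) : hval 0 y = 1 := by simp [hval, hermite_zero]
noncomputable def kr (n : ℕ) (x : ℝ) : ℝ := hval n (Real.sqrt 2 * x) * Real.exp (-(x ^ 2) / 2)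

noncomputable def kd (n : ℕ) (x : ℝ) : ℝ :=
  Real.sqrt 2 * (n : ℝ) * kr (n-1) x - x * kr n x

noncomputable def kd2 (n : ℕ) (x : ℝ) : ℝ :=
  Real.sqrt 2 * (n : ℝ) * kd (n-1) x - kr n x - x * kd n x

theorem hasDerivAt_sqrt2mul (x : ℝ) : HasDerivAt (fun x : ℝ => Real.sqrt 2 * x) (Real.sqrt 2) x := by
  simpa using (hasDerivAt_id x).const_mul (Real.sqrt 2)

theorem hasDerivAt_gauss (x : ℝ) :
    HasDerivAt (fun x : ℝ => Real.exp (-(x ^ 2) / 2)) (-x * Real.exp (-(x ^ 2) / 2)) x := by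
  have h1 : HasDerivAt (fun x : ℝ => -(x ^ 2) / 2) (-x) x := by
    have := ((hasDerivAt_pow 2 x).neg).div_const 2
    simpa using this.congr_deriv (by ring)
  simpa [mul_comm] using h1.exp

theorem kr_hasDerivAt (n : ℕ) (x : ℝ) : HasDerivAt (kr n) (kd n x) x := by
  have h1 : HasDerivAt (fun x : ℝ => hval n (Real.sqrt 2 * x))
      ((n : ℝ) * hval (n-1) (Real.sqrt 2 * x) * Real.sqrt 2) x :=
    (hasDerivAt_hval n (Real.sqrt 2 * x)).comp x (hasDerivAt_sqrt2mul x)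
  have h2 := h1.mul (hasDerivAt_gauss x)
  have : HasDerivAt (kr n)
      ((n : ℝ) * hval (n-1) (Real.sqrt 2 * x) * Real.sqrt 2 * Real.exp (-(x ^ 2) / 2)
        + hval n (Real.sqrt 2 * x) * (-x * Real.exp (-(x ^ 2) / 2))) x := h2
  convert this using 1
  simp only [kd, kr]
  ring

theorem kd_hasDerivAt (n : ℕ) (x : ℝ) : HasDerivAt (kd n) (kd2 n x) x := by
  have h1 := (kr_hasDerivAt (n-1) x).const_mul (Real.sqrt 2 * (n : ℝ))
  have h2 := (hasDerivAt_id x).mul (kr_hasDerivAt n x)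
  have h3 := h1.sub h2
  convert h3 using 1
  · rfl
  · rfl
  · rfl
  simp only [kd2, id_eq]
  ring

theorem kr_succ (n : ℕ) (x : ℝ) :
    kr (n+1) x = Real.sqrt 2 * x * kr n x - (n : ℝ) * kr (n-1) x := by
  simp only [kr, hval_succ]
  ring

theorem krR1 (n : ℕ) (x : ℝ) :
    -(1/2) * kd2 n x + 1/2 * x ^ 2 * kr n x = ((n : ℝ) + 1/2) * kr n x := by
  have hs : Real.sqrt 2 * Real.sqrt 2 = 2 := Real.mul_self_sqrt (by norm_num)
  cases n with
  | zero => simp only [kd2, kd, Nat.cast_zero, Nat.zero_sub]; ring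
  | succ m =>
    have hrec := kr_succ m x
    simp only [kd2, kd, Nat.add_sub_cancel]
    push_cast
    linear_combination (-((m:ℝ)+1)) * hrec +
      (-(1/2) * ((m:ℝ)+1) * (m:ℝ) * kr (m-1) x) * hs

theorem krR2 (n : ℕ) (x : ℝ) :
    x * kd n x + 1/2 * kr n x
      = (n : ℝ) * ((n : ℝ) - 1) / 2 * kr (n-2) x - 1/2 * kr (n+2) x := by
  have hs : Real.sqrt 2 * Real.sqrt 2 = 2 := Real.mul_self_sqrt (by norm_num)
  cases n with
  | zero =>
    have h2 := kr_succ 1 x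
    have h1 := kr_succ 0 x
    simp only [Nat.cast_zero, Nat.cast_one, Nat.zero_sub, Nat.sub_self] at h1 h2
    simp only [kd, Nat.cast_zero, Nat.zero_sub]
    norm_num at h1 h2 ⊢
    linear_combination (1/2) * h2 + (1/2 * Real.sqrt 2 * x) * h1 +
      (1/2 * x^2 * kr 0 x) * hs
  | succ m =>
    have h3 := kr_succ (m+2) x
    have h2 := kr_succ (m+1) x
    have h1 := kr_succ m x
    have e1 : m + 2 + 1 = m + 3 := by omega
    have e2 : m + 2 - 1 = m + 1 := by omega
    have e3 : m + 1 + 1 = m + 2 := by omega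
    have e4 : m + 1 - 1 = m := by omega
    have e5 : m + 1 + 2 = m + 3 := by omega
    have e6 : m + 1 - 2 = m - 1 := by omega
    rw [e1, e2] at h3
    rw [e3, e4] at h2
    simp only [kd, Nat.add_sub_cancel, e5, e6]
    push_cast at h1 h2 h3 ⊢
    linear_combination (1/2) * h3 + (1/2 * Real.sqrt 2 * x) * h2 +
      (-((m:ℝ)+1)/2) * h1 + (1/2 * x^2 * kr (m+1) x) * hs
theorem ket_eq (n : ℕ) : ket n = fun x => ((kr n x : ℝ) : ℂ) := rfl

theorem deriv_rkr (n : ℕ) (r : ℝ) :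
    deriv (fun x => ((r * kr n x : ℝ) : ℂ)) = fun x => ((r * kd n x : ℝ) : ℂ) := by
  funext x
  exact (((kr_hasDerivAt n x).const_mul r).ofReal_comp).deriv

theorem deriv2_rkr (n : ℕ) (r : ℝ) :
    deriv (deriv (fun x => ((r * kr n x : ℝ) : ℂ))) = fun x => ((r * kd2 n x : ℝ) : ℂ) := by
  rw [deriv_rkr]
  funext x
  exact (((kd_hasDerivAt n x).const_mul r).ofReal_comp).deriv

theorem comp_H (n : ℕ) (r : ℝ) (x : ℝ) :
    -(1/2 : ℂ) * deriv (deriv (fun x => ((r * kr n x : ℝ) : ℂ))) x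
      + (1/2) * (x : ℂ) ^ 2 * ((r * kr n x : ℝ) : ℂ)
      = ((((n : ℝ) + 1/2) * (r * kr n x) : ℝ) : ℂ) := by
  rw [deriv2_rkr]
  have h := congrArg (fun t : ℝ => (t : ℂ)) (krR1 n x)
  push_cast at h ⊢
  linear_combination (r : ℂ) * h

theorem comp_D (n : ℕ) (r : ℝ) (x : ℝ) :
    (x : ℂ) * deriv (fun x => ((r * kr n x : ℝ) : ℂ)) x + (1/2) * ((r * kr n x : ℝ) : ℂ)
      = ((r * ((n : ℝ) * ((n : ℝ) - 1) / 2 * kr (n-2) x - 1/2 * kr (n+2) x) : ℝ) : ℂ) := by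
  rw [deriv_rkr]
  have h := congrArg (fun t : ℝ => (t : ℂ)) (krR2 n x)
  push_cast at h ⊢
  linear_combination (r : ℂ) * h
theorem integrable_pow_gauss (n : ℕ) :
    MeasureTheory.Integrable (fun x : ℝ => x ^ n * Real.exp (-x ^ 2)) := by
  have h := integrable_rpow_mul_exp_neg_mul_sq (b := 1) one_pos
    (s := (n : ℝ)) (by exact lt_of_lt_of_le (by norm_num) (Nat.cast_nonneg n))
  simpa [Real.rpow_natCast, neg_one_mul] using h

theorem integrable_poly_gauss (p : Polynomial ℝ) :
    MeasureTheory.Integrable (fun x : ℝ => p.eval x * Real.exp (-x ^ 2)) := by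
  have : (fun x : ℝ => p.eval x * Real.exp (-x ^ 2))
      = fun x : ℝ => ∑ i ∈ Finset.range (p.natDegree + 1),
          p.coeff i * (x ^ i * Real.exp (-x ^ 2)) := by
    funext x
    rw [Polynomial.eval_eq_sum_range, Finset.sum_mul]
    simp [mul_assoc]
  rw [this]
  exact MeasureTheory.integrable_finset_sum _
    fun i _ => (integrable_pow_gauss i).const_mul _

theorem integrable_hh (m n : ℕ) :
    MeasureTheory.Integrable (fun x : ℝ =>
      hval m (Real.sqrt 2 * x) * hval n (Real.sqrt 2 * x) * Real.exp (-x ^ 2)) := by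
  have h := integrable_poly_gauss
    (((hermite m * hermite n).map (algebraMap ℤ ℝ)).comp (Polynomial.C (Real.sqrt 2) * Polynomial.X))
  have e : ∀ x : ℝ, (((hermite m * hermite n).map (algebraMap ℤ ℝ)).comp
      (Polynomial.C (Real.sqrt 2) * Polynomial.X)).eval x
      = hval m (Real.sqrt 2 * x) * hval n (Real.sqrt 2 * x) := by
    intro x
    simp only [Polynomial.eval_comp, Polynomial.eval_mul, Polynomial.eval_C,
      Polynomial.eval_X, Polynomial.map_mul, hval, Polynomial.aeval_def,
      Polynomial.eval₂_eq_eval_map]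
  simpa only [e] using h

noncomputable def Iher (m n : ℕ) : ℝ :=
  ∫ x : ℝ, hval m (Real.sqrt 2 * x) * hval n (Real.sqrt 2 * x) * Real.exp (-x ^ 2)

theorem Iher_symm (m n : ℕ) : Iher m n = Iher n m := by
  unfold Iher
  congr 1
  funext x
  ring

theorem Iher_step (m n : ℕ) : Iher m (n + 1) = (m : ℝ) * Iher (m - 1) n := by
  have hs : Real.sqrt 2 * Real.sqrt 2 = 2 := Real.mul_self_sqrt (by norm_num)
  have hs0 : (0 : ℝ) < Real.sqrt 2 := by positivity
  set F : ℝ → ℝ := fun x =>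
    hval m (Real.sqrt 2 * x) * hval n (Real.sqrt 2 * x) * Real.exp (-x ^ 2) with hF
  set G : ℝ → ℝ := fun x =>
    Real.sqrt 2 * (m : ℝ) *
        (hval (m-1) (Real.sqrt 2 * x) * hval n (Real.sqrt 2 * x) * Real.exp (-x ^ 2))
      - Real.sqrt 2 *
        (hval m (Real.sqrt 2 * x) * hval (n+1) (Real.sqrt 2 * x) * Real.exp (-x ^ 2)) with hG
  have hderiv : ∀ x, HasDerivAt F (G x) x := by
    intro x
    have h1 : HasDerivAt (fun x : ℝ => hval m (Real.sqrt 2 * x))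
        ((m : ℝ) * hval (m-1) (Real.sqrt 2 * x) * Real.sqrt 2) x :=
      (hasDerivAt_hval m (Real.sqrt 2 * x)).comp x (hasDerivAt_sqrt2mul x)
    have h2 : HasDerivAt (fun x : ℝ => hval n (Real.sqrt 2 * x))
        ((n : ℝ) * hval (n-1) (Real.sqrt 2 * x) * Real.sqrt 2) x :=
      (hasDerivAt_hval n (Real.sqrt 2 * x)).comp x (hasDerivAt_sqrt2mul x)
    have h3 : HasDerivAt (fun x : ℝ => Real.exp (-x ^ 2))
        (-2 * x * Real.exp (-x ^ 2)) x := by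
      have h4 : HasDerivAt (fun x : ℝ => -x ^ 2) (-2 * x) x := by
        simpa using (hasDerivAt_pow 2 x).fun_neg
      simpa [mul_comm] using h4.exp
    have h5 := (h1.mul h2).mul h3
    convert h5 using 1
    · rfl
    · rfl
    · rfl
    have hrec := hval_succ n (Real.sqrt 2 * x)
    rw [hG]
    simp only [Pi.mul_apply]
    linear_combination
      (-(Real.sqrt 2) * hval m (Real.sqrt 2 * x) * Real.exp (-x ^ 2)) * hrec +
      (-x * hval m (Real.sqrt 2 * x) * hval n (Real.sqrt 2 * x) * Real.exp (-x ^ 2)) * hs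
  have hGint : MeasureTheory.Integrable G := by
    exact (((integrable_hh (m-1) n).const_mul _).sub ((integrable_hh m (n+1)).const_mul _))
  have hFint : MeasureTheory.Integrable F := integrable_hh m n
  have h0 : (∫ x : ℝ, G x) = 0 :=
    MeasureTheory.integral_eq_zero_of_hasDerivAt_of_integrable hderiv hGint hFint
  rw [hG] at h0
  rw [MeasureTheory.integral_sub (((integrable_hh (m-1) n).const_mul _))
    (((integrable_hh m (n+1)).const_mul _)), MeasureTheory.integral_const_mul,
    MeasureTheory.integral_const_mul] at h0
  have h0' : Real.sqrt 2 * ((m : ℝ) * Iher (m-1) n - Iher m (n+1)) = 0 := by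
    unfold Iher
    linear_combination h0
  rcases mul_eq_zero.mp h0' with h | h
  · exact absurd h (ne_of_gt hs0)
  · linarith
theorem Iher_zero_zero : Iher 0 0 = Real.sqrt Real.pi := by
  unfold Iher
  have h : ∀ x : ℝ, hval 0 (Real.sqrt 2 * x) * hval 0 (Real.sqrt 2 * x) * Real.exp (-x ^ 2)
      = Real.exp (-1 * x ^ 2) := by
    intro x
    rw [hval_zero]
    ring_nf
  simp only [h]
  rw [integral_gaussian]
  norm_num

theorem Iher_eq : ∀ n m : ℕ, Iher m n = if m = n then (n.factorial : ℝ) * Real.sqrt Real.pi else 0 := by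
  intro n
  induction n with
  | zero =>
    intro m
    cases m with
    | zero => simpa using Iher_zero_zero
    | succ m' =>
      rw [Iher_symm, Iher_step]
      simp
  | succ n ih =>
    intro m
    cases m with
    | zero =>
      have h := Iher_step 0 n
      simp only [Nat.cast_zero, zero_mul] at h
      rw [h]
      simp
    | succ m' =>
      rw [Iher_step]
      simp only [Nat.add_sub_cancel, ih m']
      by_cases h : m' = n
      · subst h
        simp [Nat.factorial_succ]
        ring
      · simp [h, fun hh => h (Nat.succ_injective hh)]
noncomputable def nuv (m : ℕ) : ℝ := (Real.sqrt ((m.factorial : ℝ) * Real.sqrt Real.pi))⁻¹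

noncomputable def cc (k : ℕ) : ℝ := (-1 : ℝ) ^ (k / 2) * nuv (2 * k)

noncomputable def fv (k : ℕ) : (ℝ → ℂ) × (ℝ → ℂ) :=
  if Even k then (fun x => ((cc k * kr (2 * k) x : ℝ) : ℂ), 0)
  else (0, fun x => ((cc k * kr (2 * k) x : ℝ) : ℂ))

theorem fact_sqrtpi_pos (m : ℕ) : 0 < (m.factorial : ℝ) * Real.sqrt Real.pi := by
  have h1 : 0 < (m.factorial : ℝ) := by exact_mod_cast m.factorial_pos
  have h2 : 0 < Real.sqrt Real.pi := Real.sqrt_pos.2 Real.pi_pos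
  positivity

theorem nuv_pos (m : ℕ) : 0 < nuv m :=
  inv_pos.2 (Real.sqrt_pos.2 (fact_sqrtpi_pos m))

theorem cc_ne_zero (k : ℕ) : cc k ≠ 0 :=
  mul_ne_zero (pow_ne_zero _ (by norm_num)) (ne_of_gt (nuv_pos _))

theorem nuv_mul_self (m : ℕ) :
    nuv m * nuv m * ((m.factorial : ℝ) * Real.sqrt Real.pi) = 1 := by
  have hC := fact_sqrtpi_pos m
  have hs := Real.mul_self_sqrt hC.le
  have hs0 : Real.sqrt ((m.factorial : ℝ) * Real.sqrt Real.pi) ≠ 0 :=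
    ne_of_gt (Real.sqrt_pos.2 hC)
  rw [nuv, ← mul_inv, hs, inv_mul_cancel₀ hC.ne']

theorem fact_rel (k : ℕ) : (((2*k+2).factorial : ℝ))
    = ((2*(k:ℝ)+1) * (2*(k:ℝ)+2)) * ((2*k).factorial : ℝ) := by
  have : (2*k+2) = (2*k+1) + 1 := by omega
  rw [this, Nat.factorial_succ, Nat.factorial_succ]
  push_cast
  ring

theorem sqrtA_pos (k : ℕ) : 0 < Real.sqrt ((2*(k:ℝ)+1) * (2*(k:ℝ)+2)) := by
  apply Real.sqrt_pos.2
  positivity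

theorem nuv_split (k : ℕ) : nuv (2*k+2)
    = (Real.sqrt ((2*(k:ℝ)+1) * (2*(k:ℝ)+2)))⁻¹ * nuv (2*k) := by
  rw [nuv, nuv, fact_rel, mul_assoc, Real.sqrt_mul (by positivity), mul_inv]

theorem aPlus_eq (k : ℕ) : aPlus k = -Real.sqrt ((2*(k:ℝ)+1) * (2*(k:ℝ)+2)) := rfl

theorem aPlus_nu (k : ℕ) : aPlus k * nuv (2*k+2) = -nuv (2*k) := by
  rw [aPlus_eq, nuv_split]
  have h1 := sqrtA_pos k
  have h4 : Real.sqrt ((2*(k:ℝ)+1) * (2*(k:ℝ)+2))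
      * (Real.sqrt ((2*(k:ℝ)+1) * (2*(k:ℝ)+2)))⁻¹ = 1 := mul_inv_cancel₀ h1.ne'
  linear_combination (-(nuv (2*k))) * h4

theorem nu_rel (k : ℕ) :
    ((2*(k:ℝ)+1) * (2*(k:ℝ)+2)) * nuv (2*k+2) = -(aPlus k) * nuv (2*k) := by
  rw [aPlus_eq, nuv_split]
  have h1 := sqrtA_pos k
  have h2 := Real.mul_self_sqrt (show (0:ℝ) ≤ (2*(k:ℝ)+1) * (2*(k:ℝ)+2) by positivity)
  have h4 : Real.sqrt ((2*(k:ℝ)+1) * (2*(k:ℝ)+2))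
      * (Real.sqrt ((2*(k:ℝ)+1) * (2*(k:ℝ)+2)))⁻¹ = 1 := mul_inv_cancel₀ h1.ne'
  linear_combination (-((Real.sqrt ((2*(k:ℝ)+1) * (2*(k:ℝ)+2)))⁻¹ * nuv (2*k))) * h2
    + (Real.sqrt ((2*(k:ℝ)+1) * (2*(k:ℝ)+2)) * nuv (2*k)) * h4
theorem SE1 (k t : ℕ) (ht : k = 2*t) :
    -(cc (k+1)) * ((2*(k:ℝ)+1) * (2*(k:ℝ)+2) / 2) = aPlus k / 2 * cc k := by
  subst ht
  have hd1 : (2*t+1)/2 = t := by omega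
  have hd0 : (2*t)/2 = t := by omega
  have e : 2*(2*t+1) = 2*(2*t)+2 := by omega
  rw [cc, cc, hd1, hd0, e]
  have hrel := nu_rel (2*t)
  push_cast at hrel ⊢
  linear_combination (-((-1:ℝ)^t)/2) * hrel

theorem SE2 (k t : ℕ) (ht : k = 2*t) :
    cc (k+1) / 2 = aPlus (k+1) / 2 * cc (k+2) := by
  subst ht
  have hd1 : (2*t+1)/2 = t := by omega
  have hd2 : (2*t+2)/2 = t+1 := by omega
  have e1 : 2*(2*t+2) = 2*(2*t+1)+2 := by omega
  rw [cc, cc, hd1, hd2, e1]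
  have h := aPlus_nu (2*t+1)
  push_cast at h ⊢
  linear_combination (-((-1:ℝ)^(t+1))/2) * h

theorem SO1 (k t : ℕ) (ht : k = 2*t+1) :
    cc (k+1) * ((2*(k:ℝ)+1) * (2*(k:ℝ)+2) / 2) = aPlus k / 2 * cc k := by
  subst ht
  have hd1 : (2*t+2)/2 = t+1 := by omega
  have hd0 : (2*t+1)/2 = t := by omega
  have e : 2*(2*t+2) = 2*(2*t+1)+2 := by omega
  rw [cc, cc, hd1, hd0, e]
  have hrel := nu_rel (2*t+1)
  push_cast at hrel ⊢
  linear_combination ((-1:ℝ)^(t+1)/2) * hrel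

theorem SO2 (k t : ℕ) (ht : k = 2*t+1) :
    -(cc (k+1)) / 2 = aPlus (k+1) / 2 * cc (k+2) := by
  subst ht
  have hd1 : (2*t+2)/2 = t+1 := by omega
  have hd2 : (2*t+3)/2 = t+1 := by omega
  have e1 : 2*(2*t+3) = 2*(2*t+2)+2 := by omega
  rw [cc, cc, hd1, hd2, e1]
  have h := aPlus_nu (2*t+2)
  push_cast at h ⊢
  linear_combination (-((-1:ℝ)^(t+1))/2) * h

theorem Ezero : -(cc 0) / 2 = aPlus 0 / 2 * cc 1 := by
  have h := aPlus_nu 0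
  have e1 : 2*0+2 = 2*1 := by omega
  rw [e1] at h
  rw [cc, cc]
  have e3 : 2*0 = 0 := by omega
  rw [e3] at h ⊢
  push_cast at h ⊢
  linear_combination (-(1:ℝ)/2) * h

theorem deriv_zero_fun : deriv (0 : ℝ → ℂ) = 0 := by
  funext x
  change deriv (fun _ => (0:ℂ)) x = 0
  rw [deriv_const]

theorem fv_even_def (k : ℕ) (hk : Even k) :
    fv k = (fun x => ((cc k * kr (2*k) x : ℝ) : ℂ), 0) := by rw [fv, if_pos hk]

theorem fv_odd_def (k : ℕ) (hk : ¬ Even k) :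
    fv k = (0, fun x => ((cc k * kr (2*k) x : ℝ) : ℂ)) := by rw [fv, if_neg hk]
theorem main_rec (α β : ℝ) (k : ℕ) :
    Qact α β (fv (k + 1)) = ((aPlus k / 2 : ℝ) : ℂ) • fv k
      + ((bPlusOne α β (k + 1) / 2 : ℝ) : ℂ) • fv (k + 1)
      + ((aPlus (k + 1) / 2 : ℝ) : ℂ) • fv (k + 2) := by
  rcases Nat.even_or_odd k with hk | hk
  · -- k even : fv k, fv (k+2) in first slot, fv (k+1) in second slot
    obtain ⟨t, ht⟩ := hk
    have ht2 : k = 2*t := by omega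
    have hkev : Even k := ⟨t, ht⟩
    have hk1 : ¬ Even (k+1) := by simp [Nat.even_add_one, hkev]
    have hk2 : Even (k+2) := ⟨t+1, by omega⟩
    rw [fv_odd_def _ hk1, fv_even_def _ hkev, fv_even_def _ hk2]
    have s1 := congrArg (fun r : ℝ => (r : ℂ)) (SE1 k t ht2)
    have s2 := congrArg (fun r : ℝ => (r : ℂ)) (SE2 k t ht2)
    push_cast at s1 s2
    have e1 : 2*(k+1)-2 = 2*k := by omega
    have e2 : 2*(k+1)+2 = 2*(k+2) := by omega
    refine Prod.ext ?_ ?_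
    · funext x
      have hD := comp_D (2*(k+1)) (cc (k+1)) x
      rw [e1, e2] at hD
      simp only [Qact, Prod.smul_mk, Prod.mk_add_mk, smul_zero, add_zero, zero_add,
        Pi.add_apply, Pi.smul_apply, smul_eq_mul, Pi.zero_apply, deriv_zero_fun,
        mul_zero, zero_mul, add_zero, neg_zero, zero_sub, zero_add]
      rw [hD]
      push_cast
      linear_combination ((kr (2*k) x : ℂ)) * s1 + ((kr (2*(k+2)) x : ℂ)) * s2
    · funext x
      have hH := comp_H (2*(k+1)) (cc (k+1)) x
      simp only [Qact, Prod.smul_mk, Prod.mk_add_mk, smul_zero, add_zero, zero_add,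
        Pi.add_apply, Pi.smul_apply, smul_eq_mul, Pi.zero_apply, deriv_zero_fun,
        mul_zero, zero_mul, add_zero, zero_add]
      rw [hH, bPlusOne, if_neg hk1]
      push_cast
      ring
  · -- k odd
    obtain ⟨t, ht⟩ := hk
    have hkodd : ¬ Even k := by simp [ht, Nat.even_add_one, parity_simps]
    have hk1 : Even (k+1) := ⟨t+1, by omega⟩
    have hk2 : ¬ Even (k+2) := by simp [Nat.even_add_one, Nat.even_add, hkodd]
    rw [fv_even_def _ hk1, fv_odd_def _ hkodd, fv_odd_def _ hk2]
    have s1 := congrArg (fun r : ℝ => (r : ℂ)) (SO1 k t ht)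
    have s2 := congrArg (fun r : ℝ => (r : ℂ)) (SO2 k t ht)
    push_cast at s1 s2
    have e1 : 2*(k+1)-2 = 2*k := by omega
    have e2 : 2*(k+1)+2 = 2*(k+2) := by omega
    refine Prod.ext ?_ ?_
    · funext x
      have hH := comp_H (2*(k+1)) (cc (k+1)) x
      simp only [Qact, Prod.smul_mk, Prod.mk_add_mk, smul_zero, add_zero, zero_add,
        Pi.add_apply, Pi.smul_apply, smul_eq_mul, Pi.zero_apply, deriv_zero_fun,
        mul_zero, zero_mul, add_zero, zero_add, sub_zero]
      rw [hH, bPlusOne, if_pos hk1]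
      push_cast
      ring
    · funext x
      have hD := comp_D (2*(k+1)) (cc (k+1)) x
      rw [e1, e2] at hD
      simp only [Qact, Prod.smul_mk, Prod.mk_add_mk, smul_zero, add_zero, zero_add,
        Pi.add_apply, Pi.smul_apply, smul_eq_mul, Pi.zero_apply, deriv_zero_fun,
        mul_zero, zero_mul, add_zero, neg_zero, zero_add]
      rw [hD]
      push_cast
      linear_combination ((kr (2*k) x : ℂ)) * s1 + ((kr (2*(k+2)) x : ℂ)) * s2

theorem main_zero (α β : ℝ) :
    Qact α β (fv 0) = ((bPlusOne α β 0 / 2 : ℝ) : ℂ) • fv 0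
      + ((aPlus 0 / 2 : ℝ) : ℂ) • fv 1 := by
  have h0 : Even 0 := ⟨0, rfl⟩
  have h1 : ¬ Even 1 := by decide
  rw [fv_even_def _ h0, fv_odd_def _ h1]
  have s2 := congrArg (fun r : ℝ => (r : ℂ)) Ezero
  push_cast at s2
  have e2 : 0+2 = 2*1 := by omega
  have e1 : 0-2 = 0 := by omega
  refine Prod.ext ?_ ?_
  · funext x
    have hH := comp_H 0 (cc 0) x
    simp only [Qact, Prod.smul_mk, Prod.mk_add_mk, smul_zero, add_zero, zero_add,
      Pi.add_apply, Pi.smul_apply, smul_eq_mul, Pi.zero_apply, deriv_zero_fun,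
      mul_zero, zero_mul, add_zero, zero_add, sub_zero]
    rw [hH, bPlusOne, if_pos h0]
    push_cast
    ring
  · funext x
    have hD := comp_D 0 (cc 0) x
    rw [e1, e2] at hD
    simp only [Qact, Prod.smul_mk, Prod.mk_add_mk, smul_zero, add_zero, zero_add,
      Pi.add_apply, Pi.smul_apply, smul_eq_mul, Pi.zero_apply, deriv_zero_fun,
      mul_zero, zero_mul, add_zero, zero_add]
    rw [hD]
    push_cast
    linear_combination ((kr (2*1) x : ℂ)) * s2
theorem fv_even_smul (t : ℕ) :
    fv (2*t) = ((cc (2*t) : ℂ)) • ((ket (4*t), 0) : (ℝ → ℂ) × (ℝ → ℂ)) := by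
  rw [fv_even_def _ ⟨t, by omega⟩]
  refine Prod.ext ?_ ?_
  · funext x
    rw [ket_eq]
    have e : 4*t = 2*(2*t) := by omega
    rw [e]
    simp [Complex.ofReal_mul]
  · simp

theorem fv_odd_smul (t : ℕ) :
    fv (2*t+1) = ((cc (2*t+1) : ℂ)) • ((0, ket (4*t+2)) : (ℝ → ℂ) × (ℝ → ℂ)) := by
  rw [fv_odd_def _ (by simp [Nat.even_add_one, parity_simps])]
  refine Prod.ext ?_ ?_
  · simp
  · funext x
    rw [ket_eq]
    have e : 4*t+2 = 2*(2*t+1) := by omega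
    rw [e]
    simp [Complex.ofReal_mul]

theorem fv_mem (k : ℕ) : fv k ∈ Submodule.span ℂ SplusOne := by
  rcases Nat.even_or_odd k with ⟨t, ht⟩ | ⟨t, ht⟩
  · have h : k = 2*t := by omega
    subst h
    rw [fv_even_smul]
    exact Submodule.smul_mem _ _ (Submodule.subset_span ⟨t, Or.inl rfl⟩)
  · subst ht
    rw [fv_odd_smul]
    exact Submodule.smul_mem _ _ (Submodule.subset_span ⟨t, Or.inr rfl⟩)

theorem ccC_ne_zero (k : ℕ) : (cc k : ℂ) ≠ 0 := Complex.ofReal_ne_zero.2 (cc_ne_zero k)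

theorem span_eq : Submodule.span ℂ (Set.range fv) = Submodule.span ℂ SplusOne := by
  apply le_antisymm
  · rw [Submodule.span_le]
    rintro _ ⟨k, rfl⟩
    exact fv_mem k
  · rw [Submodule.span_le]
    rintro g ⟨n, hg | hg⟩ <;> subst hg
    · have h := fv_even_smul n
      have heq : ((ket (4*n), 0) : (ℝ → ℂ) × (ℝ → ℂ)) = (cc (2*n) : ℂ)⁻¹ • fv (2*n) := by
        rw [h, inv_smul_smul₀ (ccC_ne_zero _)]
      rw [SetLike.mem_coe, heq]
      exact Submodule.smul_mem _ _ (Submodule.subset_span ⟨2*n, rfl⟩)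
    · have h := fv_odd_smul n
      have heq : ((0, ket (4*n+2)) : (ℝ → ℂ) × (ℝ → ℂ)) = (cc (2*n+1) : ℂ)⁻¹ • fv (2*n+1) := by
        rw [h, inv_smul_smul₀ (ccC_ne_zero _)]
      rw [SetLike.mem_coe, heq]
      exact Submodule.smul_mem _ _ (Submodule.subset_span ⟨2*n+1, rfl⟩)

theorem kr_mul (m n : ℕ) (x : ℝ) :
    kr m x * kr n x
      = hval m (Real.sqrt 2 * x) * hval n (Real.sqrt 2 * x) * Real.exp (-x ^ 2) := by
  have h : Real.exp (-(x^2)/2) * Real.exp (-(x^2)/2) = Real.exp (-x^2) := by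
    rw [← Real.exp_add]
    ring_nf
  simp only [kr]
  linear_combination (hval m (Real.sqrt 2 * x) * hval n (Real.sqrt 2 * x)) * h

theorem cc_sq (k : ℕ) : cc k * cc k * (((2*k).factorial : ℝ) * Real.sqrt Real.pi) = 1 := by
  have hp : ((-1:ℝ)^(k/2)) * ((-1:ℝ)^(k/2)) = 1 := by
    rw [← pow_add]
    exact Even.neg_one_pow ⟨k/2, rfl⟩
  have hν := nuv_mul_self (2*k)
  rw [cc]
  linear_combination (nuv (2*k) * nuv (2*k) * (((2*k).factorial : ℝ) * Real.sqrt Real.pi)) * hp + hν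

theorem ortho (j k : ℕ) :
    (∫ x : ℝ, (starRingEnd ℂ) ((fv j).1 x) * (fv k).1 x
        + (starRingEnd ℂ) ((fv j).2 x) * (fv k).2 x) = if j = k then 1 else 0 := by
  rcases Nat.even_or_odd j with hj | hj <;> rcases Nat.even_or_odd k with hk | hk
  · -- even even
    rw [fv_even_def _ hj, fv_even_def _ hk]
    have hint : (fun x : ℝ => (starRingEnd ℂ) (((cc j * kr (2*j) x : ℝ) : ℂ)) * ((cc k * kr (2*k) x : ℝ) : ℂ)
          + (starRingEnd ℂ) ((0 : ℝ → ℂ) x) * (0 : ℝ → ℂ) x)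
        = fun x : ℝ => (((cc j * cc k) * (hval (2*j) (Real.sqrt 2 * x) * hval (2*k) (Real.sqrt 2 * x) * Real.exp (-x ^ 2)) : ℝ) : ℂ) := by
      funext x
      simp only [Pi.zero_apply, map_zero, mul_zero, add_zero, Complex.conj_ofReal,
        ← Complex.ofReal_mul]
      congr 1
      linear_combination (cc j * cc k) * kr_mul (2*j) (2*k) x
    have hcast : (∫ x : ℝ, (((cc j * cc k) * (hval (2*j) (Real.sqrt 2 * x) * hval (2*k) (Real.sqrt 2 * x) * Real.exp (-x ^ 2)) : ℝ) : ℂ))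
        = (((∫ x : ℝ, (cc j * cc k) * (hval (2*j) (Real.sqrt 2 * x) * hval (2*k) (Real.sqrt 2 * x) * Real.exp (-x ^ 2))) : ℝ) : ℂ) := integral_ofReal
    have hI : (∫ x : ℝ, hval (2*j) (Real.sqrt 2 * x) * hval (2*k) (Real.sqrt 2 * x) * Real.exp (-x ^ 2)) = Iher (2*j) (2*k) := rfl
    rw [hint, hcast, MeasureTheory.integral_const_mul, hI, Iher_eq]
    by_cases h : j = k
    · subst h
      rw [if_pos rfl, if_pos rfl]
      rw [show cc j * cc j * (((2*j).factorial : ℝ) * Real.sqrt Real.pi) = 1 from cc_sq j]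
      norm_num
    · rw [if_neg (by omega), if_neg h]
      norm_num
  · -- even odd
    rw [fv_even_def _ hj, fv_odd_def _ (Nat.not_even_iff_odd.2 hk)]
    have : j ≠ k := by
      obtain ⟨a, ha⟩ := hj; obtain ⟨b, hb⟩ := hk; omega
    simp [this]
  · -- odd even
    rw [fv_odd_def _ (Nat.not_even_iff_odd.2 hj), fv_even_def _ hk]
    have : j ≠ k := by
      obtain ⟨a, ha⟩ := hj; obtain ⟨b, hb⟩ := hk; omega
    simp [this]
  · -- odd odd
    rw [fv_odd_def _ (Nat.not_even_iff_odd.2 hj),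
      fv_odd_def _ (Nat.not_even_iff_odd.2 hk)]
    have hint : (fun x : ℝ => (starRingEnd ℂ) ((0 : ℝ → ℂ) x) * (0 : ℝ → ℂ) x
          + (starRingEnd ℂ) (((cc j * kr (2*j) x : ℝ) : ℂ)) * ((cc k * kr (2*k) x : ℝ) : ℂ))
        = fun x : ℝ => (((cc j * cc k) * (hval (2*j) (Real.sqrt 2 * x) * hval (2*k) (Real.sqrt 2 * x) * Real.exp (-x ^ 2)) : ℝ) : ℂ) := by
      funext x
      simp only [Pi.zero_apply, map_zero, mul_zero, zero_mul, zero_add, Complex.conj_ofReal,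
        ← Complex.ofReal_mul]
      congr 1
      linear_combination (cc j * cc k) * kr_mul (2*j) (2*k) x
    have hcast : (∫ x : ℝ, (((cc j * cc k) * (hval (2*j) (Real.sqrt 2 * x) * hval (2*k) (Real.sqrt 2 * x) * Real.exp (-x ^ 2)) : ℝ) : ℂ))
        = (((∫ x : ℝ, (cc j * cc k) * (hval (2*j) (Real.sqrt 2 * x) * hval (2*k) (Real.sqrt 2 * x) * Real.exp (-x ^ 2))) : ℝ) : ℂ) := integral_ofReal
    have hI : (∫ x : ℝ, hval (2*j) (Real.sqrt 2 * x) * hval (2*k) (Real.sqrt 2 * x) * Real.exp (-x ^ 2)) = Iher (2*j) (2*k) := rfl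
    rw [hint, hcast, MeasureTheory.integral_const_mul, hI, Iher_eq]
    by_cases h : j = k
    · subst h
      rw [if_pos rfl, if_pos rfl]
      rw [show cc j * cc j * (((2*j).factorial : ℝ) * Real.sqrt Real.pi) = 1 from cc_sq j]
      norm_num
    · rw [if_neg (by omega), if_neg h]
      norm_num

/-- The restriction `Q_{+1}` of `Q(α,β)` to `H_{+1}` is unitarily equivalent to the
Jacobi matrix `Q̂_{+1}`: there is an orthonormal basis of `H_{+1}` in which `Q` acts
as the Jacobi matrix with diagonal `b_{+1}(n)/2` and off-diagonal `a_+(n)/2`. -/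
theorem Q_plus_one_jacobi_representation (α β : ℝ) (hα : 0 < α) (hβ : 0 < β)
    (hαβ : 1 < α * β) :
    ∃ f : ℕ → ((ℝ → ℂ) × (ℝ → ℂ)),
      (∀ k, f k ∈ Submodule.span ℂ SplusOne) ∧
      (∀ j k, (∫ x : ℝ, (starRingEnd ℂ) ((f j).1 x) * (f k).1 x
          + (starRingEnd ℂ) ((f j).2 x) * (f k).2 x) = if j = k then 1 else 0) ∧
      Submodule.span ℂ (Set.range f) = Submodule.span ℂ SplusOne ∧
      (Qact α β (f 0) = ((bPlusOne α β 0 / 2 : ℝ) : ℂ) • f 0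
          + ((aPlus 0 / 2 : ℝ) : ℂ) • f 1) ∧
      (∀ k, Qact α β (f (k + 1)) = ((aPlus k / 2 : ℝ) : ℂ) • f k
          + ((bPlusOne α β (k + 1) / 2 : ℝ) : ℂ) • f (k + 1)
          + ((aPlus (k + 1) / 2 : ℝ) : ℂ) • f (k + 2)) :=
  ⟨fv, fv_mem, ortho, span_eq, main_zero α β, main_rec α β⟩
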